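/- Let 𝐭 = (a_s:b_s, ..., a_1:b_1) be a nonempty index tuple in column standard form with indices from {0,...,k−1}, and let x ∈ {0,...,b_s−1} be such that (𝐭, x) satisfies the SIP. Then the number of strings of csf(𝐭, x) equals the number of strings of 𝐭 if and only if x − 1 ∈ heads(𝐭). In particular, x = 0 always increases the number of strings. -/

import Mathlib

/-- The Successor Infix Property: between any two equal indices of the tuple there is an
occurrence of their successor. -/
def SIP (t : List ℕ) : Prop :=
  ∀ a b : Fin t.length, a < b → t.get a = t.get b →
    ∃ c : Fin t.length, a < c ∧ c < b ∧ t.get c = t.get a + 1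

/-- One swap of two adjacent distinct commuting indices (indices differing by ≥ 2). -/
def CommuteStep (t t' : List ℕ) : Prop :=
  ∃ (u v : List ℕ) (x y : ℕ), x ≠ y ∧ x + 1 ≠ y ∧ y + 1 ≠ x ∧
    t = u ++ x :: y :: v ∧ t' = u ++ y :: x :: v

/-- Equivalence of index tuples: generated by swapping adjacent commuting indices. -/
def TupleEquiv : List ℕ → List ℕ → Prop := Relation.ReflTransGen CommuteStep

/-- The string `(a : b) = (a, a+1, ..., b)`. -/
def strTuple (a b : ℕ) : List ℕ := List.range' a (b + 1 - a)

/-- The tuple `(a_s : b_s, ..., a_1 : b_1)` built from a list of pairs of endpoints. -/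
def buildCSF (ps : List (ℕ × ℕ)) : List ℕ :=
  (ps.map fun p => strTuple p.1 p.2).flatten

/-- `ps` encodes a tuple in column standard form: each pair `(a_j, b_j)` has `a_j ≤ b_j`
and the heads `b_s > b_{s-1} > ... > b_1` are strictly decreasing. -/
def IsCSFDecomp (ps : List (ℕ × ℕ)) : Prop :=
  (∀ pr ∈ ps, pr.1 ≤ pr.2) ∧ List.Chain' (· > ·) (ps.map Prod.snd)

namespace CSFAux

def pv (v z : ℕ) : Bool := z = v || z = v + 1

def bare (v : ℕ) : List ℕ → ℕ
  | [] => 0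
  | a :: l => (if a = v ∧ l.head? ≠ some (v + 1) then 1 else 0) + bare v l

lemma mem_strTuple {a b e : ℕ} (hab : a ≤ b) : e ∈ strTuple a b ↔ a ≤ e ∧ e ≤ b := by
  rw [strTuple, List.mem_range'_1]; omega

lemma strTuple_concat {a b : ℕ} (hab : a ≤ b + 1) :
    strTuple a (b + 1) = strTuple a b ++ [b + 1] := by
  unfold strTuple
  have h1 : b + 1 + 1 - a = (b + 1 - a) + 1 := by omega
  rw [h1, List.range'_concat]
  congr 2
  omega

lemma buildCSF_append (l1 l2 : List (ℕ × ℕ)) :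
    buildCSF (l1 ++ l2) = buildCSF l1 ++ buildCSF l2 := by
  simp [buildCSF]

lemma buildCSF_cons (pr : ℕ × ℕ) (l : List (ℕ × ℕ)) :
    buildCSF (pr :: l) = strTuple pr.1 pr.2 ++ buildCSF l := by
  simp [buildCSF]

lemma filter_nil_of {l : List ℕ} {v : ℕ} (h : ∀ e ∈ l, ¬ (e = v ∨ e = v + 1)) :
    l.filter (pv v) = [] := by
  apply List.filter_eq_nil_iff.mpr
  intro e he
  simp only [pv, Bool.or_eq_true, decide_eq_true_eq]
  exact h e he

lemma filter_strTuple_high {a b v : ℕ} (h : b < v) : (strTuple a b).filter (pv v) = [] := by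
  apply filter_nil_of
  intro e he
  rw [strTuple, List.mem_range'_1] at he
  omega

lemma filter_strTuple_low {a b v : ℕ} (h : v + 1 < a) : (strTuple a b).filter (pv v) = [] := by
  apply filter_nil_of
  intro e he
  rw [strTuple, List.mem_range'_1] at he
  omega

lemma range'_split {s m n : ℕ} : List.range' s (m + n) = List.range' s m ++ List.range' (s + m) n := by
  have := List.range'_append (s := s) (m := m) (n := n) (step := 1)
  simp only [one_mul] at this
  rw [← this]

lemma filter_strTuple_head {a v : ℕ} (hav : a ≤ v) : (strTuple a v).filter (pv v) = [v] := by
  have hsplit : strTuple a v = List.range' a (v - a) ++ [v] := by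
    unfold strTuple
    have h1 : v + 1 - a = (v - a) + 1 := by omega
    rw [h1, List.range'_concat]
    congr 2
    omega
  rw [hsplit, List.filter_append, filter_nil_of (l := List.range' a (v - a)), List.nil_append]
  · simp [pv]
  · intro e he
    rw [List.mem_range'_1] at he
    omega

lemma filter_strTuple_mid {a b v : ℕ} (hav : a ≤ v) (hvb : v < b) :
    (strTuple a b).filter (pv v) = [v, v + 1] := by
  have hsplit : strTuple a b = List.range' a (v - a) ++ ((v) :: (v + 1) :: List.range' (v + 2) (b - 1 - v)) := by
    unfold strTuple
    have h1 : b + 1 - a = (v - a) + ((b - 1 - v) + 1 + 1) := by omega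
    rw [h1, range'_split]
    have h2 : a + (v - a) = v := by omega
    rw [h2, List.range'_succ, List.range'_succ]
  rw [hsplit, List.filter_append, filter_nil_of (l := List.range' a (v - a))]
  · simp only [List.nil_append, List.filter_cons]
    have h3 : (List.range' (v + 2) (b - 1 - v)).filter (pv v) = [] := by
      apply filter_nil_of
      intro e he
      rw [List.mem_range'_1] at he
      omega
    simp [pv, h3]
  · intro e he
    rw [List.mem_range'_1] at he
    omega

lemma filter_strTuple_succ {b v : ℕ} (h : v + 1 ≤ b) :
    (strTuple (v + 1) b).filter (pv v) = [v + 1] := by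
  have hsplit : strTuple (v + 1) b = (v + 1) :: List.range' (v + 2) (b - 1 - v) := by
    unfold strTuple
    have h1 : b + 1 - (v + 1) = (b - 1 - v) + 1 := by omega
    rw [h1, List.range'_succ]
  rw [hsplit, List.filter_cons]
  have h3 : (List.range' (v + 2) (b - 1 - v)).filter (pv v) = [] := by
    apply filter_nil_of
    intro e he
    rw [List.mem_range'_1] at he
    omega
  simp [pv, h3]

lemma mem_buildCSF {ps : List (ℕ × ℕ)} {e : ℕ} :
    e ∈ buildCSF ps ↔ ∃ pr ∈ ps, e ∈ strTuple pr.1 pr.2 := by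
  simp only [buildCSF, List.mem_flatten, List.mem_map]
  constructor
  · rintro ⟨l, ⟨pr, hpr, rfl⟩, hel⟩
    exact ⟨pr, hpr, hel⟩
  · rintro ⟨pr, hpr, hel⟩
    exact ⟨_, ⟨pr, hpr, rfl⟩, hel⟩

lemma entries_lt {ps : List (ℕ × ℕ)} {B : ℕ} (h1 : ∀ pr ∈ ps, pr.1 ≤ pr.2)
    (hh : ∀ pr ∈ ps, pr.2 < B) : ∀ e ∈ buildCSF ps, e < B := by
  intro e he
  obtain ⟨pr, hpr, hepr⟩ := mem_buildCSF.mp he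
  have := (mem_strTuple (h1 pr hpr)).mp hepr
  have := hh pr hpr
  omega

lemma head_mem_buildCSF {ps : List (ℕ × ℕ)} (h1 : ∀ pr ∈ ps, pr.1 ≤ pr.2)
    {h : ℕ} (hh : h ∈ ps.map Prod.snd) : h ∈ buildCSF ps := by
  obtain ⟨pr, hpr, rfl⟩ := List.mem_map.mp hh
  exact mem_buildCSF.mpr ⟨pr, hpr, (mem_strTuple (h1 pr hpr)).mpr ⟨h1 pr hpr, le_refl _⟩⟩

lemma bare_cons_succ (v : ℕ) (W : List ℕ) : bare v ((v + 1) :: W) = bare v W := by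
  simp [bare]

lemma bare_cons_pair (v : ℕ) (W : List ℕ) : bare v (v :: (v + 1) :: W) = bare v W := by
  simp [bare]

lemma bare_count {ps : List (ℕ × ℕ)} (h1 : ∀ pr ∈ ps, pr.1 ≤ pr.2)
    (h2 : List.Pairwise (· > ·) (ps.map Prod.snd)) (v : ℕ) :
    bare v ((buildCSF ps).filter (pv v)) = (ps.map Prod.snd).count v := by
  induction ps with
  | nil => simp [buildCSF, bare]
  | cons pr rest ih =>
    obtain ⟨a, b⟩ := pr
    have hab : a ≤ b := h1 _ (List.mem_cons_self)
    have h1' : ∀ pr ∈ rest, pr.1 ≤ pr.2 := fun pr hpr => h1 pr (List.mem_cons_of_mem _ hpr)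
    rw [List.map_cons] at h2
    have hlt : ∀ h ∈ rest.map Prod.snd, h < b := (List.pairwise_cons.mp h2).1
    have h2' := (List.pairwise_cons.mp h2).2
    have hlt' : ∀ pr ∈ rest, pr.2 < b := by
      intro pr hpr
      exact hlt _ (List.mem_map_of_mem hpr)
    have hent : ∀ e ∈ buildCSF rest, e < b := entries_lt h1' hlt'
    have ihW := ih h1' h2'
    rw [buildCSF_cons, List.filter_append]
    simp only [List.map_cons, List.count_cons]
    rcases lt_trichotomy b v with h | h | h
    · rw [filter_strTuple_high h, List.nil_append, ihW]
      have hbne : ¬ (b = v) := by omega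
      simp [hbne]
    · subst h
      rw [filter_strTuple_head hab]
      have hWnil : (buildCSF rest).filter (pv b) = [] := by
        apply filter_nil_of
        intro e he
        have := hent e he
        omega
      rw [hWnil] at ihW ⊢
      simp [bare, ← ihW]
    · have hbne : ¬ (b = v) := by omega
      rcases Nat.lt_or_ge v a with ha | ha
      · rcases Nat.lt_or_ge (v + 1) a with ha' | ha'
        · rw [filter_strTuple_low ha', List.nil_append, ihW]
          simp [hbne]
        · have hav : a = v + 1 := by omega
          subst hav
          rw [filter_strTuple_succ (by omega), List.cons_append, List.nil_append,
            bare_cons_succ, ihW]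
          simp [hbne]
      · rw [filter_strTuple_mid ha h, List.cons_append, List.cons_append, List.nil_append,
          bare_cons_pair, ihW]
        simp [hbne]

lemma count_sum {l : List ℕ} {K : ℕ} (h : ∀ e ∈ l, e < K) :
    ∑ v ∈ Finset.range K, l.count v = l.length := by
  induction l with
  | nil => simp
  | cons a l ih =>
    have ha : a ∈ Finset.range K := Finset.mem_range.mpr (h a (List.mem_cons_self))
    simp only [List.count_cons, List.length_cons, beq_iff_eq]
    rw [Finset.sum_add_distrib, ih (fun e he => h e (List.mem_cons_of_mem _ he))]
    congr 1
    rw [Finset.sum_ite_eq (Finset.range K) a (fun _ => 1), if_pos ha]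

lemma commuteStep_symm : Symmetric CommuteStep := by
  rintro t t' ⟨u, w, x, y, h1, h2, h3, rfl, rfl⟩
  exact ⟨u, w, y, x, Ne.symm h1, h3, h2, rfl, rfl⟩

lemma tupleEquiv_symm {t t' : List ℕ} (h : TupleEquiv t t') : TupleEquiv t' t :=
  by haveI : Std.Symm CommuteStep := ⟨fun a b h => commuteStep_symm h⟩; exact Std.Symm.symm (r := Relation.ReflTransGen CommuteStep) _ _ h

lemma commuteStep_perm {t t' : List ℕ} (h : CommuteStep t t') : t.Perm t' := by
  obtain ⟨u, w, x, y, _, _, _, rfl, rfl⟩ := h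
  exact List.Perm.append_left u (List.Perm.swap y x w)

lemma tupleEquiv_perm {t t' : List ℕ} (h : TupleEquiv t t') : t.Perm t' := by
  induction h with
  | refl => exact List.Perm.refl _
  | tail _ hstep ih => exact ih.trans (commuteStep_perm hstep)

lemma commuteStep_filter {t t' : List ℕ} (h : CommuteStep t t') (v : ℕ) :
    t.filter (pv v) = t'.filter (pv v) := by
  obtain ⟨u, w, x, y, h1, h2, h3, rfl, rfl⟩ := h
  simp only [List.filter_append]
  congr 1
  have hb : pv v x = false ∨ pv v y = false := by
    by_contra hc
    push_neg at hc
    obtain ⟨hx, hy⟩ := hc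
    simp only [Bool.not_eq_false, pv, Bool.or_eq_true, decide_eq_true_eq] at hx hy
    omega
  rcases hb with hb | hb <;> simp [List.filter_cons, hb]

lemma tupleEquiv_filter {t t' : List ℕ} (h : TupleEquiv t t') (v : ℕ) :
    t.filter (pv v) = t'.filter (pv v) := by
  induction h with
  | refl => rfl
  | tail _ hstep ih => exact ih.trans (commuteStep_filter hstep v)

lemma tupleEquiv_move {x : ℕ} : ∀ (L U : List ℕ), (∀ e ∈ L, e + 2 ≤ x) →
    TupleEquiv (U ++ L ++ [x]) (U ++ x :: L)
  | [], U, _ => by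
    simp only [List.append_nil]
    exact Relation.ReflTransGen.refl
  | e :: L, U, h => by
    have he : e + 2 ≤ x := h e (List.mem_cons_self)
    have ih := tupleEquiv_move L (U ++ [e]) (fun e' he' => h e' (List.mem_cons_of_mem _ he'))
    have step : CommuteStep ((U ++ [e]) ++ x :: L) (U ++ x :: e :: L) :=
      ⟨U, L, e, x, by omega, by omega, by omega, by simp, rfl⟩
    have heq : U ++ (e :: L) ++ [x] = (U ++ [e]) ++ L ++ [x] := by simp
    rw [heq]
    exact Relation.ReflTransGen.tail ih step

lemma length_eq_of_equiv {ps1 ps2 : List (ℕ × ℕ)} (h1 : IsCSFDecomp ps1) (h2 : IsCSFDecomp ps2)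
    (he : TupleEquiv (buildCSF ps1) (buildCSF ps2)) : ps1.length = ps2.length := by
  haveI : IsTrans ℕ (· > ·) := ⟨fun _ _ _ h1 h2 => lt_trans h2 h1⟩
  have hp1 : List.Pairwise (· > ·) (ps1.map Prod.snd) := List.isChain_iff_pairwise.mp h1.2
  have hp2 : List.Pairwise (· > ·) (ps2.map Prod.snd) := List.isChain_iff_pairwise.mp h2.2
  set K := ((buildCSF ps1).foldr max 0) + 1 with hK
  have hfold : ∀ (l : List ℕ) (e : ℕ), e ∈ l → e ≤ l.foldr max 0 := by
    intro l
    induction l with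
    | nil => intro e he; cases he
    | cons a l ih =>
      intro e he
      rcases List.mem_cons.mp he with rfl | he
      · exact le_max_left _ _
      · exact le_trans (ih e he) (le_max_right _ _)
  have hb1 : ∀ e ∈ buildCSF ps1, e < K := fun e he => Nat.lt_succ_of_le (hfold _ e he)
  have hb2 : ∀ e ∈ buildCSF ps2, e < K := fun e hm =>
    hb1 e ((tupleEquiv_perm he).mem_iff.mpr hm)
  have hh1 : ∀ h ∈ ps1.map Prod.snd, h < K := fun h hh => hb1 h (head_mem_buildCSF h1.1 hh)
  have hh2 : ∀ h ∈ ps2.map Prod.snd, h < K := fun h hh => hb2 h (head_mem_buildCSF h2.1 hh)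
  have e1 : ps1.length = ∑ v ∈ Finset.range K, (ps1.map Prod.snd).count v := by
    rw [count_sum hh1, List.length_map]
  have e2 : ps2.length = ∑ v ∈ Finset.range K, (ps2.map Prod.snd).count v := by
    rw [count_sum hh2, List.length_map]
  rw [e1, e2]
  apply Finset.sum_congr rfl
  intro v _
  rw [← bare_count h1.1 hp1 v, ← bare_count h2.1 hp2 v, tupleEquiv_filter he v]

lemma sip_contra {x : ℕ} {P Q R : List ℕ}
    (hs : SIP (P ++ x :: (Q ++ x :: R))) (hQ : ∀ e ∈ Q, e ≠ x + 1) : False := by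
  set t := P ++ x :: (Q ++ x :: R) with ht
  have hlen : t.length = P.length + Q.length + R.length + 2 := by
    simp [ht]
    omega
  have hi : P.length < t.length := by omega
  have hj : P.length + 1 + Q.length < t.length := by omega
  have hgi : t.get ⟨P.length, hi⟩ = x := by
    simp only [List.get_eq_getElem, ht]
    rw [List.getElem_append_right (le_refl _)]
    simp
  have hgj : t.get ⟨P.length + 1 + Q.length, hj⟩ = x := by
    simp only [List.get_eq_getElem, ht]
    rw [List.getElem_append_right (by omega : P.length ≤ P.length + 1 + Q.length)]
    have h1 : P.length + 1 + Q.length - P.length = Q.length + 1 := by omega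
    simp only [h1, List.getElem_cons_succ]
    rw [List.getElem_append_right (le_refl _)]
    simp
  have hij : (⟨P.length, hi⟩ : Fin t.length) < ⟨P.length + 1 + Q.length, hj⟩ := by
    simp only [Fin.lt_def]
    omega
  obtain ⟨c, hic, hcj, hc⟩ := hs ⟨P.length, hi⟩ ⟨P.length + 1 + Q.length, hj⟩ hij
    (hgi.trans hgj.symm)
  rw [hgi] at hc
  have hic' : P.length < c.val := hic
  have hcj' : c.val < P.length + 1 + Q.length := hcj
  have hgc : ∀ (n : ℕ) (hn : n < t.length), P.length < n → n < P.length + 1 + Q.length →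
      t.get ⟨n, hn⟩ ∈ Q := by
    intro n hn hn1 hn2
    obtain ⟨m, rfl⟩ : ∃ m, n = P.length + 1 + m := ⟨n - P.length - 1, by omega⟩
    have hm : m < Q.length := by omega
    simp only [List.get_eq_getElem, ht]
    rw [List.getElem_append_right (by omega : P.length ≤ P.length + 1 + m)]
    have h3 : P.length + 1 + m - P.length = m + 1 := by omega
    simp only [h3, List.getElem_cons_succ]
    rw [List.getElem_append_left hm]
    exact List.getElem_mem hm
  exact hQ _ (hgc c.1 c.2 hic' hcj') hc

lemma x_not_head {ps : List (ℕ × ℕ)} {x : ℕ} (hps : IsCSFDecomp ps)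
    (hsip : SIP (buildCSF ps ++ [x])) : x ∉ ps.map Prod.snd := by
  intro hx
  obtain ⟨pr, hpr, hpr2⟩ := List.mem_map.mp hx
  obtain ⟨p1, p2, hsplit⟩ := List.append_of_mem hpr
  obtain ⟨a, b⟩ := pr
  simp only at hpr2
  obtain rfl := hpr2.symm
  subst hsplit
  have hab : a ≤ x := hps.1 (a, x) (by simp)
  haveI : IsTrans ℕ (· > ·) := ⟨fun _ _ _ h1 h2 => lt_trans h2 h1⟩
  have hpw : List.Pairwise (· > ·) ((p1 ++ (a, x) :: p2).map Prod.snd) :=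
    List.isChain_iff_pairwise.mp hps.2
  rw [List.map_append, List.map_cons, List.pairwise_append] at hpw
  have hlt : ∀ h ∈ p2.map Prod.snd, h < x := (List.pairwise_cons.mp hpw.2.1).1
  have hent : ∀ e ∈ buildCSF p2, e < x := by
    apply entries_lt (fun pr hpr => hps.1 pr (by simp [hpr]))
    intro pr hpr
    exact hlt _ (List.mem_map_of_mem hpr)
  have hstr : strTuple a x = List.range' a (x - a) ++ [x] := by
    unfold strTuple
    have h1 : x + 1 - a = (x - a) + 1 := by omega
    rw [h1, List.range'_concat]
    congr 2
    omega
  have harr : buildCSF (p1 ++ (a, x) :: p2) ++ [x] =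
      (buildCSF p1 ++ List.range' a (x - a)) ++ x :: (buildCSF p2 ++ x :: []) := by
    rw [buildCSF_append, buildCSF_cons, hstr]
    simp
  rw [harr] at hsip
  exact sip_contra hsip (fun e he => by have := hent e he; omega)

lemma split_at {ps : List (ℕ × ℕ)} {x : ℕ}
    (hpw : List.Pairwise (· > ·) (ps.map Prod.snd)) (hx : x ∉ ps.map Prod.snd) :
    ∃ p1 p2, ps = p1 ++ p2 ∧ (∀ pr ∈ p1, x < pr.2) ∧ (∀ pr ∈ p2, pr.2 < x) := by
  induction ps with
  | nil => exact ⟨[], [], rfl, by simp, by simp⟩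
  | cons pr rest ih =>
    rw [List.map_cons, List.pairwise_cons] at hpw
    have hbx : pr.2 ≠ x := fun h => hx (by simp [← h])
    have hxr : x ∉ rest.map Prod.snd := fun h => hx (by simp [h])
    rcases Nat.lt_or_ge x pr.2 with h | h
    · obtain ⟨p1, p2, heq, hp1, hp2⟩ := ih hpw.2 hxr
      exact ⟨pr :: p1, p2, by rw [heq, List.cons_append],
        fun q hq => by rcases List.mem_cons.mp hq with rfl | hq
                       · exact h
                       · exact hp1 q hq, hp2⟩
    · refine ⟨[], pr :: rest, rfl, by simp, ?_⟩
      intro q hq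
      rcases List.mem_cons.mp hq with rfl | hq
      · omega
      · have := hpw.1 _ (List.mem_map_of_mem (f := Prod.snd) hq)
        omega

lemma range'_one (s : ℕ) : List.range' s 1 = [s] := rfl

lemma strTuple_self (x : ℕ) : strTuple x x = [x] := by
  unfold strTuple
  have h : x + 1 - x = 1 := by omega
  rw [h]
  rfl

lemma exists_typeII {ps : List (ℕ × ℕ)} {x : ℕ} (hps : IsCSFDecomp ps)
    (hxh : x ∉ ps.map Prod.snd) (hB : ∀ y ∈ ps.map Prod.snd, y + 1 ≠ x) :
    ∃ psB, IsCSFDecomp psB ∧ TupleEquiv (buildCSF ps ++ [x]) (buildCSF psB) ∧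
      psB.length = ps.length + 1 := by
  haveI : IsTrans ℕ (· > ·) := ⟨fun _ _ _ h1 h2 => lt_trans h2 h1⟩
  have hpw : List.Pairwise (· > ·) (ps.map Prod.snd) := List.isChain_iff_pairwise.mp hps.2
  obtain ⟨p1, p2, rfl, hp1, hp2⟩ := split_at hpw hxh
  have hp2' : ∀ pr ∈ p2, pr.2 + 2 ≤ x := by
    intro pr hpr
    have h1 := hp2 pr hpr
    have hmem : pr.2 ∈ (p1 ++ p2).map Prod.snd := by
      rw [List.map_append]
      exact List.mem_append_right _ (List.mem_map_of_mem (f := Prod.snd) hpr)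
    have h2 := hB pr.2 hmem
    omega
  refine ⟨p1 ++ (x, x) :: p2, ⟨?_, ?_⟩, ?_, by simp only [List.length_append, List.length_cons]; omega⟩
  · intro pr hpr
    rcases List.mem_append.mp hpr with h | h
    · exact hps.1 pr (List.mem_append_left _ h)
    · rcases List.mem_cons.mp h with rfl | h
      · exact le_refl _
      · exact hps.1 pr (List.mem_append_right _ h)
  · rw [List.map_append] at hpw
    rw [List.pairwise_append] at hpw
    apply List.isChain_iff_pairwise.mpr
    rw [List.map_append, List.map_cons, List.pairwise_append]
    refine ⟨hpw.1, List.pairwise_cons.mpr ⟨?_, hpw.2.1⟩, ?_⟩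
    · intro h hh
      obtain ⟨pr, hpr, rfl⟩ := List.mem_map.mp hh
      exact hp2 pr hpr
    · intro h1 hh1 h2 hh2
      rcases List.mem_cons.mp hh2 with rfl | hh2
      · obtain ⟨pr, hpr, rfl⟩ := List.mem_map.mp hh1
        exact hp1 pr hpr
      · exact hpw.2.2 h1 hh1 h2 hh2
  · have hent : ∀ e ∈ buildCSF p2, e + 2 ≤ x := by
      intro e he
      obtain ⟨pr, hpr, hepr⟩ := mem_buildCSF.mp he
      have h1 := (mem_strTuple (hps.1 pr (List.mem_append_right _ hpr))).mp hepr
      have := hp2' pr hpr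
      omega
    have hmv := tupleEquiv_move (buildCSF p2) (buildCSF p1) hent
    have e1 : buildCSF (p1 ++ p2) ++ [x] = buildCSF p1 ++ buildCSF p2 ++ [x] := by
      rw [buildCSF_append]
    have e2 : buildCSF p1 ++ x :: buildCSF p2 = buildCSF (p1 ++ (x, x) :: p2) := by
      rw [buildCSF_append, buildCSF_cons, strTuple_self]
      simp
    rw [e1, ← e2]
    exact hmv

lemma exists_typeI {ps : List (ℕ × ℕ)} {x : ℕ} (hps : IsCSFDecomp ps)
    (hxh : x ∉ ps.map Prod.snd) (hA : ∃ y ∈ ps.map Prod.snd, y + 1 = x) :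
    ∃ psA, IsCSFDecomp psA ∧ TupleEquiv (buildCSF ps ++ [x]) (buildCSF psA) ∧
      psA.length = ps.length := by
  haveI : IsTrans ℕ (· > ·) := ⟨fun _ _ _ h1 h2 => lt_trans h2 h1⟩
  obtain ⟨y, hy, rfl⟩ := hA
  obtain ⟨pr, hpr, hpr2⟩ := List.mem_map.mp hy
  obtain ⟨p1, p2, hsplit⟩ := List.append_of_mem hpr
  obtain ⟨a, b⟩ := pr
  simp only at hpr2
  obtain rfl := hpr2.symm
  subst hsplit
  have hab : a ≤ y := hps.1 (a, y) (by simp)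
  have hpw : List.Pairwise (· > ·) ((p1 ++ (a, y) :: p2).map Prod.snd) :=
    List.isChain_iff_pairwise.mp hps.2
  rw [List.map_append, List.map_cons, List.pairwise_append] at hpw
  have hylt : ∀ h ∈ p2.map Prod.snd, h < y := (List.pairwise_cons.mp hpw.2.1).1
  have hP2 : List.Pairwise (· > ·) (p2.map Prod.snd) := (List.pairwise_cons.mp hpw.2.1).2
  have hp1y : ∀ h1 ∈ p1.map Prod.snd, h1 > y + 1 := by
    intro h1 hh1
    have hgt := hpw.2.2 h1 hh1 y (List.mem_cons_self)
    have hne : h1 ≠ y + 1 := by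
      intro h
      apply hxh
      rw [List.map_append, List.map_cons, ← h]
      exact List.mem_append_left _ hh1
    omega
  refine ⟨p1 ++ (a, y + 1) :: p2, ⟨?_, ?_⟩, ?_, by simp only [List.length_append, List.length_cons]⟩
  · intro q hq
    rcases List.mem_append.mp hq with h | h
    · exact hps.1 q (List.mem_append_left _ h)
    · rcases List.mem_cons.mp h with rfl | h
      · simp
        omega
      · exact hps.1 q (List.mem_append_right _ (List.mem_cons_of_mem _ h))
  · apply List.isChain_iff_pairwise.mpr
    rw [List.map_append, List.map_cons, List.pairwise_append]
    refine ⟨hpw.1, List.pairwise_cons.mpr ⟨?_, hP2⟩, ?_⟩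
    · intro h hh
      have := hylt h hh
      omega
    · intro h1 hh1 h2 hh2
      rcases List.mem_cons.mp hh2 with rfl | hh2
      · exact hp1y h1 hh1
      · exact hpw.2.2 h1 hh1 h2 (List.mem_cons_of_mem _ hh2)
  · have hent : ∀ e ∈ buildCSF p2, e + 2 ≤ y + 1 := by
      intro e he
      obtain ⟨q, hq, heq⟩ := mem_buildCSF.mp he
      have h1 := (mem_strTuple (hps.1 q (List.mem_append_right _
        (List.mem_cons_of_mem _ hq)))).mp heq
      have := hylt q.2 (List.mem_map_of_mem (f := Prod.snd) hq)
      omega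
    have hmv := tupleEquiv_move (buildCSF p2) (buildCSF p1 ++ strTuple a y) hent
    have e1 : buildCSF (p1 ++ (a, y) :: p2) ++ [y + 1] =
        (buildCSF p1 ++ strTuple a y) ++ buildCSF p2 ++ [y + 1] := by
      rw [buildCSF_append, buildCSF_cons]
      simp
    have e2 : (buildCSF p1 ++ strTuple a y) ++ (y + 1) :: buildCSF p2 =
        buildCSF (p1 ++ (a, y + 1) :: p2) := by
      rw [buildCSF_append, buildCSF_cons]
      simp only
      rw [strTuple_concat (by omega : a ≤ y + 1)]
      simp
    rw [e1, ← e2]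
    exact hmv

end CSFAux

open CSFAux

/-- The set of heads of an index tuple `t`: the right endpoints of the strings of the
column standard form of `t`. -/
def headsSet (t : List ℕ) : Set ℕ :=
  {h | ∃ ps, IsCSFDecomp ps ∧ TupleEquiv t (buildCSF ps) ∧ h ∈ ps.map Prod.snd}

/-- Proposition: let `t = (a_s:b_s, …, a_1:b_1)` be a nonempty tuple in column standard
form (encoded by `ps`) with indices from `{0,…,k-1}` and let `x < b_s` be such that
`(t, x)` satisfies the SIP. Then `csf(t,x)` has the same number of strings as `t` if and
only if `x - 1` is a head of `t` (i.e. `x = y + 1` for some head `y`); in particular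
`x = 0` is always of Type II (it increases the number of strings). -/
theorem typeI_iff_pred_head (k : ℕ) (ps : List (ℕ × ℕ)) (hps : IsCSFDecomp ps)
    (hne : ps ≠ []) (hk : ∀ pr ∈ ps, pr.2 < k)
    (x : ℕ) (hx : x < (ps.head hne).2)
    (hsip : SIP (buildCSF ps ++ [x])) :
    ((∃ ps', IsCSFDecomp ps' ∧ TupleEquiv (buildCSF ps ++ [x]) (buildCSF ps') ∧
        ps'.length = ps.length) ↔ ∃ y ∈ ps.map Prod.snd, y + 1 = x) ∧
    (x = 0 → ¬ ∃ ps', IsCSFDecomp ps' ∧ TupleEquiv (buildCSF ps ++ [x]) (buildCSF ps') ∧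
        ps'.length = ps.length) := by
  have hxnh : x ∉ ps.map Prod.snd := x_not_head hps hsip
  by_cases hA : ∃ y ∈ ps.map Prod.snd, y + 1 = x
  · refine ⟨⟨fun _ => hA, fun _ => ?_⟩, fun hx0 => ?_⟩
    · obtain ⟨psA, h1, h2, h3⟩ := exists_typeI hps hxnh hA
      exact ⟨psA, h1, h2, h3⟩
    · obtain ⟨y, _, hy⟩ := hA
      omega
  · push_neg at hA
    obtain ⟨psB, hB1, hB2, hB3⟩ := exists_typeII hps hxnh hA
    have noI : ¬ ∃ ps', IsCSFDecomp ps' ∧ TupleEquiv (buildCSF ps ++ [x]) (buildCSF ps') ∧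
        ps'.length = ps.length := by
      rintro ⟨ps', h1', h2', h3'⟩
      have hlen := length_eq_of_equiv h1' hB1 ((tupleEquiv_symm h2').trans hB2)
      omega
    refine ⟨⟨fun h => absurd h noI, fun h => ?_⟩, fun _ => noI⟩
    obtain ⟨y, hy1, hy2⟩ := h
    exact absurd hy2 (hA y hy1)
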